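/- If a connected graph G contains a vertex adjacent to at least three pendant vertices (vertices of degree 1), then G has no m-resolving set, i.e., md(G) = ∞. -/
import Mathlib


open SimpleGraph

/-- The multiset of distances from `v` to the vertices of `W`. -/
noncomputable def mrep {V : Type*} (G : SimpleGraph V) (W : Finset V) (v : V) : Multiset ℕ :=
  W.val.map (fun w => G.dist v w)

/-- `W` is an m-resolving set of `G`: distinct vertices have distinct
representation multisets. -/
def IsMResolving {V : Type*} (G : SimpleGraph V) (W : Finset V) : Prop :=
  ∀ u v : V, u ≠ v → mrep G W u ≠ mrep G W v

/-- The multiset dimension of `G`, equal to `⊤` if `G` has no m-resolving set. -/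
noncomputable def mdim {V : Type*} (G : SimpleGraph V) : ℕ∞ :=
  ⨅ W : {W : Finset V // IsMResolving G W}, (W.1.card : ℕ∞)

lemma pendant_dist {V : Type*} [Fintype V] [DecidableEq V] (G : SimpleGraph V)
    [DecidableRel G.Adj] (hG : G.Connected) {c p : V} (a : G.Adj c p)
    (d : G.degree p = 1) {w : V} (hw : w ≠ p) : G.dist p w = G.dist c w + 1 := by
  have hnb : G.neighborFinset p = {c} := by
    obtain ⟨x, hx⟩ := Finset.card_eq_one.mp (by rw [← d]; rfl)
    have hc : c ∈ G.neighborFinset p := by simp [a.symm]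
    rw [hx] at hc
    simp only [Finset.mem_singleton] at hc
    rw [hx, hc]
  have le₁ : G.dist p w ≤ G.dist c w + 1 := by
    obtain ⟨q, hq⟩ := hG.exists_walk_length_eq_dist c w
    have := G.dist_le (SimpleGraph.Walk.cons a.symm q)
    simpa [hq, Nat.add_comm] using this
  have le₂ : G.dist c w + 1 ≤ G.dist p w := by
    obtain ⟨q, hq⟩ := hG.exists_walk_length_eq_dist p w
    cases q with
    | nil => exact absurd rfl hw.symm
    | cons h q' =>
      have hx := (G.mem_neighborFinset p _).mpr h
      rw [hnb, Finset.mem_singleton] at hx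
      subst hx
      have h2 := G.dist_le q'
      simp only [SimpleGraph.Walk.length_cons] at hq
      omega
  omega

lemma twin_mrep {V : Type*} [Fintype V] [DecidableEq V] (G : SimpleGraph V)
    [DecidableRel G.Adj] (hG : G.Connected) {c p q : V} (hpq : p ≠ q)
    (a1 : G.Adj c p) (a2 : G.Adj c q) (d1 : G.degree p = 1) (d2 : G.degree q = 1)
    (W : Finset V) (hW : (p ∈ W ↔ q ∈ W)) : mrep G W p = mrep G W q := by
  have hswap : W.val.map (Equiv.swap p q) = W.val := by
    have hmap : Finset.map (Equiv.swap p q).toEmbedding W = W := by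
      ext a
      rw [Finset.mem_map_equiv, Equiv.symm_swap]
      rcases eq_or_ne a p with rfl | hap
      · rw [Equiv.swap_apply_left]; exact hW.symm
      · rcases eq_or_ne a q with rfl | haq
        · rw [Equiv.swap_apply_right]; exact hW
        · rw [Equiv.swap_apply_of_ne_of_ne hap haq]
    exact congrArg Finset.val hmap
  have hfun : ∀ w : V, G.dist q w = G.dist p (Equiv.swap p q w) := by
    intro w
    rcases eq_or_ne w p with rfl | hwp
    · rw [Equiv.swap_apply_left, G.dist_comm]
    · rcases eq_or_ne w q with rfl | hwq
      · rw [Equiv.swap_apply_right]; simp [SimpleGraph.dist_self]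
      · rw [Equiv.swap_apply_of_ne_of_ne hwp hwq,
          pendant_dist G hG a1 d1 hwp, pendant_dist G hG a2 d2 hwq]
  unfold mrep
  conv_lhs => rw [← hswap, Multiset.map_map]
  exact Multiset.map_congr rfl (fun w _ => (hfun w).symm)

theorem stmt_11 {V : Type*} [Fintype V] [DecidableEq V] (G : SimpleGraph V)
    [DecidableRel G.Adj] (hG : G.Connected) (c p₁ p₂ p₃ : V)
    (h12 : p₁ ≠ p₂) (h13 : p₁ ≠ p₃) (h23 : p₂ ≠ p₃)
    (a1 : G.Adj c p₁) (a2 : G.Adj c p₂) (a3 : G.Adj c p₃)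
    (d1 : G.degree p₁ = 1) (d2 : G.degree p₂ = 1) (d3 : G.degree p₃ = 1) :
    (∀ W : Finset V, ¬ IsMResolving G W) ∧ mdim G = ⊤ := by
  have key : ∀ W : Finset V, ¬ IsMResolving G W := by
    intro W hW
    by_cases h1 : p₁ ∈ W <;> by_cases h2 : p₂ ∈ W <;> by_cases h3 : p₃ ∈ W
    · exact hW p₁ p₂ h12 (twin_mrep G hG h12 a1 a2 d1 d2 W (by tauto))
    · exact hW p₁ p₂ h12 (twin_mrep G hG h12 a1 a2 d1 d2 W (by tauto))
    · exact hW p₁ p₃ h13 (twin_mrep G hG h13 a1 a3 d1 d3 W (by tauto))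
    · exact hW p₂ p₃ h23 (twin_mrep G hG h23 a2 a3 d2 d3 W (by tauto))
    · exact hW p₂ p₃ h23 (twin_mrep G hG h23 a2 a3 d2 d3 W (by tauto))
    · exact hW p₁ p₃ h13 (twin_mrep G hG h13 a1 a3 d1 d3 W (by tauto))
    · exact hW p₁ p₂ h12 (twin_mrep G hG h12 a1 a2 d1 d2 W (by tauto))
    · exact hW p₁ p₂ h12 (twin_mrep G hG h12 a1 a2 d1 d2 W (by tauto))
  refine ⟨key, ?_⟩
  have : IsEmpty {W : Finset V // IsMResolving G W} :=
    ⟨fun ⟨W, h⟩ => key W h⟩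
  rw [mdim, iInf_of_empty]
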